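/- Let X be a finite topological T₀-space that is a minimal finite space (i.e., X has no down beat points and no up beat points). Then every semiflow φ : ℝ≥0 × X → X on X is trivial. -/

import Mathlib

open NNReal Topology Filter

/-- A semiflow on a topological space `X`: a jointly continuous map
`φ : ℝ≥0 × X → X` with `φ 0 x = x` and `φ s (φ t x) = φ (s + t) x`. -/
def IsSemiflow {X : Type*} [TopologicalSpace X] (φ : ℝ≥0 → X → X) : Prop :=
  Continuous (fun p : ℝ≥0 × X => φ p.1 p.2) ∧
  (∀ x : X, φ 0 x = x) ∧
  ∀ (s t : ℝ≥0) (x : X), φ s (φ t x) = φ (s + t) x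

/-- A semiflow is trivial if every time-`t` map is the identity. -/
def IsTrivialSemiflow {X : Type*} [TopologicalSpace X] (φ : ℝ≥0 → X → X) : Prop :=
  ∀ (t : ℝ≥0) (x : X), φ t x = x

/-- `x` is a down beat point: `U_x \ {x}` has a greatest element in the
specialization order (`y ⤳ x` means `y ≤ x`, i.e. `y ∈ U_x`). -/
def IsDownBeatPoint {X : Type*} [TopologicalSpace X] (x : X) : Prop :=
  ∃ m : X, (m ⤳ x ∧ m ≠ x) ∧ ∀ y : X, y ⤳ x → y ≠ x → y ⤳ m

/-- `x` is an up beat point: `F_x \ {x}` has a least element in the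
specialization order. -/
def IsUpBeatPoint {X : Type*} [TopologicalSpace X] (x : X) : Prop :=
  ∃ m : X, (x ⤳ m ∧ m ≠ x) ∧ ∀ y : X, x ⤳ y → y ≠ x → m ⤳ y

/-- A continuous self-map `f` with `f x ⤳ x` for all `x` is the identity,
provided there are no down beat points. -/
lemma eq_id_of_specializes {X : Type*} [TopologicalSpace X] [Finite X] [T0Space X]
    (hdown : ∀ x : X, ¬ IsDownBeatPoint x) (f : X → X) (hf : Continuous f)
    (hle : ∀ x : X, f x ⤳ x) : ∀ x : X, f x = x := by
  -- strict specialization is well-founded on a finite T₀ space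
  let r : X → X → Prop := fun y x => y ⤳ x ∧ y ≠ x
  have htrans : IsTrans X r := ⟨fun a b c hab hbc =>
    ⟨hab.1.trans hbc.1, fun h => hab.2 (by subst h; exact (hab.1.antisymm hbc.1).eq)⟩⟩
  have hirrefl : IsIrrefl X r := ⟨fun a h => h.2 rfl⟩
  have hwf : WellFounded r := Finite.wellFounded_of_trans_of_irrefl r
  intro x
  induction x using hwf.induction with
  | _ x ih =>
    by_contra hne
    exact hdown x ⟨f x, ⟨hle x, hne⟩, fun y hyx hyne => by
      have : f y ⤳ f x := hyx.map hf
      rwa [ih y ⟨hyx, hyne⟩] at this⟩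

/-- On a minimal finite space (no down beat points and no up beat points),
every semiflow is trivial. -/
theorem semiflow_trivial_of_minimal {X : Type*} [TopologicalSpace X] [Finite X] [T0Space X]
    (hdown : ∀ x : X, ¬ IsDownBeatPoint x) (hup : ∀ x : X, ¬ IsUpBeatPoint x)
    (φ : ℝ≥0 → X → X) (hφ : IsSemiflow φ) : IsTrivialSemiflow φ := by
  obtain ⟨hcont, h0, hadd⟩ := hφ
  cases isEmpty_or_nonempty X with
  | inl h => intro t x; exact (h.false x).elim
  | inr hne =>
    have := Fintype.ofFinite X
    -- each time-t map is continuous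
    have hct : ∀ t : ℝ≥0, Continuous (φ t) := fun t =>
      hcont.comp (continuous_const.prodMk continuous_id)
    -- for each x, find ε > 0 with φ s x ⤳ x for s < ε
    have hsmall : ∀ x : X, ∃ ε : ℝ≥0, 0 < ε ∧ ∀ s : ℝ≥0, s < ε → φ s x ⤳ x := by
      intro x
      have hcx : Continuous (fun s : ℝ≥0 => φ s x) :=
        hcont.comp (continuous_id.prodMk continuous_const)
      have hmem : (fun s : ℝ≥0 => φ s x) ⁻¹' (nhdsKer {x}) ∈ 𝓝 (0 : ℝ≥0) := by
        apply hcx.continuousAt.preimage_mem_nhds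
        exact isOpen_nhdsKer.mem_nhds (by simp only [h0]; exact subset_nhdsKer (Set.mem_singleton x))
      obtain ⟨ε, hε, hsub⟩ := NNReal.nhds_zero_basis.mem_iff.1 hmem
      exact ⟨ε, hε, fun s hs => by
        have := hsub hs
        simpa [mem_nhdsKer_singleton] using this⟩
    choose εf hεf hεspec using hsmall
    -- uniform ε
    obtain ⟨ε, hε, hεle⟩ : ∃ ε : ℝ≥0, 0 < ε ∧ ∀ x : X, ε ≤ εf x := by
      refine ⟨Finset.univ.inf' (Finset.univ_nonempty) εf, ?_, fun x => ?_⟩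
      · exact (Finset.lt_inf'_iff _).2 fun x _ => hεf x
      · exact Finset.inf'_le _ (Finset.mem_univ x)
    -- φ s = id for s < ε
    have hid : ∀ s : ℝ≥0, s < ε → ∀ x : X, φ s x = x := by
      intro s hs
      exact eq_id_of_specializes hdown (φ s) (hct s)
        (fun x => hεspec x s (lt_of_lt_of_le hs (hεle x)))
    -- iterate: φ (n • s) = (φ s)^n
    have hiter : ∀ (n : ℕ) (s : ℝ≥0) (x : X), φ (n • s) x = (φ s)^[n] x := by
      intro n s
      induction n with
      | zero => intro x; simpa using h0 x
      | succ n ih =>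
        intro x
        rw [Function.iterate_succ_apply', ← ih x, hadd, succ_nsmul, add_comm]
    intro t x
    obtain ⟨n, hn⟩ := exists_nat_gt (t / ε)
    have hn0 : (0 : ℝ≥0) < n := lt_of_le_of_lt zero_le hn
    have hnne : (n : ℝ≥0) ≠ 0 := hn0.ne'
    have hlt : t / n < ε := by
      rw [div_lt_iff₀ hn0]
      calc t = (t / ε) * ε := by rw [div_mul_cancel₀ _ hε.ne']
      _ < n * ε := by exact mul_lt_mul_of_pos_right hn hε
      _ = ε * n := mul_comm _ _
    have ht : (n : ℕ) • (t / n) = t := by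
      rw [nsmul_eq_mul, mul_div_cancel₀ _ hnne]
    have := hiter n (t / n) x
    rw [ht] at this
    rw [this]
    have hfix : ∀ y, φ (t / n) y = y := hid _ hlt
    exact Function.iterate_fixed (hfix x) n
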